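/- Let (α, μ) be a finite measure space, let φ : α → ℝ be measurable with φ ≥ 0 almost everywhere and with φ² integrable with respect to μ, and let λ₁, λ be real numbers with 0 < λ₁ < λ. Then there exists a real constant M such that for every t ≥ 0, ∫_α [ (λ₁/2)·t²·φ(x)² + 1 − (λ/2)·(max(t·φ(x) − 1, 0))² ] dμ(x) ≤ M. -/
import Mathlib


open MeasureTheory

/-- Core of Lemma 5.1: the family of integrals
`∫ (λ₁/2)t²φ² + 1 − (λ/2)(tφ−1)₊² dμ`, `t ≥ 0`, is bounded above when `λ > λ₁ > 0`,
`μ` is a finite measure, `φ ≥ 0` a.e. and `φ²` is integrable. -/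
theorem stmt_3 {α : Type*} [MeasurableSpace α] (μ : Measure α) [IsFiniteMeasure μ]
    (φ : α → ℝ) (hmeas : Measurable φ) (hpos : ∀ᵐ x ∂μ, 0 ≤ φ x)
    (hint : Integrable (fun x => (φ x) ^ 2) μ)
    (lam1 lam : ℝ) (h1 : 0 < lam1) (h2 : lam1 < lam) :
    ∃ M : ℝ, ∀ t : ℝ, 0 ≤ t →
      (∫ x, (lam1 / 2 * t ^ 2 * (φ x) ^ 2 + 1
        - lam / 2 * (max (t * φ x - 1) 0) ^ 2) ∂μ) ≤ M := by
  set C : ℝ := 1 + lam ^ 2 / (2 * (lam - lam1)) with hC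
  refine ⟨∫ _x, C ∂μ, fun t ht => ?_⟩
  have hd : (0:ℝ) < 2 * (lam - lam1) := by linarith
  -- integrability of the max term
  have hmax : Integrable (fun x => (max (t * φ x - 1) 0) ^ 2) μ := by
    refine Integrable.mono (hint.const_mul (t ^ 2)) ?_ ?_
    · exact ((hmeas.const_mul t).sub_const 1).max measurable_const |>.pow_const 2
        |>.aestronglyMeasurable
    · filter_upwards [hpos] with x hx
      have hs : 0 ≤ t * φ x := mul_nonneg ht hx
      have h0 : (0:ℝ) ≤ max (t * φ x - 1) 0 := le_max_right _ _
      have h1' : max (t * φ x - 1) 0 ≤ t * φ x := max_le (by linarith) hs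
      have : (max (t * φ x - 1) 0) ^ 2 ≤ (t * φ x) ^ 2 := by
        exact pow_le_pow_left₀ h0 h1' 2
      rw [Real.norm_eq_abs, Real.norm_eq_abs, abs_of_nonneg (by positivity)]
      calc (max (t * φ x - 1) 0) ^ 2 ≤ (t * φ x) ^ 2 := this
        _ = t ^ 2 * φ x ^ 2 := by ring
        _ ≤ |t ^ 2 * φ x ^ 2| := le_abs_self _
  have hf : Integrable (fun x => lam1 / 2 * t ^ 2 * (φ x) ^ 2 + 1
      - lam / 2 * (max (t * φ x - 1) 0) ^ 2) μ := by
    exact (((hint.const_mul (lam1 / 2 * t ^ 2)).add (integrable_const 1)).sub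
      (hmax.const_mul (lam / 2)))
  refine integral_mono_ae hf (integrable_const C) ?_
  filter_upwards [hpos] with x hx
  set s : ℝ := t * φ x with hs
  have hs0 : 0 ≤ s := mul_nonneg ht hx
  have hkey : s ^ 2 - 2 * s ≤ (max (s - 1) 0) ^ 2 := by
    rcases le_total s 1 with h | h
    · rw [max_eq_right (by linarith)]; nlinarith
    · rw [max_eq_left (by linarith)]; nlinarith
  have hts : t ^ 2 * φ x ^ 2 = s ^ 2 := by rw [hs]; ring
  have hquad : lam * s - (lam - lam1) / 2 * s ^ 2 ≤ lam ^ 2 / (2 * (lam - lam1)) := by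
    rw [le_div_iff₀ hd]
    nlinarith [sq_nonneg ((lam - lam1) * s - lam)]
  have hl : 0 < lam := h1.trans h2
  calc lam1 / 2 * t ^ 2 * (φ x) ^ 2 + 1 - lam / 2 * (max (s - 1) 0) ^ 2
      ≤ lam1 / 2 * s ^ 2 + 1 - lam / 2 * (s ^ 2 - 2 * s) := by
        rw [mul_assoc, hts]
        have := mul_le_mul_of_nonneg_left hkey (by positivity : (0:ℝ) ≤ lam / 2)
        linarith
    _ = 1 + (lam * s - (lam - lam1) / 2 * s ^ 2) := by ring
    _ ≤ C := by rw [hC]; linarith
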